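/- Let p be prime, n a positive integer, and R2 = Z_p[u]/(u^2). Suppose C = <g(x) + u·p(x), u·a(x)> is a cyclic code of length n over R2 where g(x), a(x) ∈ Z_p[x] are monic with deg g = r, deg a = t, t ≤ r, a(x) | g(x) | (x^n - 1) mod p, and a(x) divides p(x)·(x^n-1)/g(x) mod p. Then the set B = {x^i(g(x) + u·p(x)) : 0 ≤ i ≤ n-r-1} ∪ {x^j·u·a(x) : 0 ≤ j ≤ r-t-1} is a minimal spanning set for C as an R2-module, and |C| = p^{2n - r - t}. -/

import Mathlib

open Polynomial

set_option synthInstance.maxHeartbeats 1000000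
set_option maxHeartbeats 1000000

noncomputable section

/-- `Ru p k` is the ring `R_k = Z_p[u]/(u^k)`. -/
abbrev Ru (p k : ℕ) : Type := Polynomial (ZMod p) ⧸ Ideal.span {(X : Polynomial (ZMod p)) ^ k}

/-- The element `u` of `Ru p k`. -/
abbrev uR (p k : ℕ) : Ru p k := Ideal.Quotient.mk _ (X : Polynomial (ZMod p))

instance (p k n : ℕ) : (Ideal.span {(X : Polynomial (Ru p k)) ^ n - 1}).IsTwoSided :=
  ⟨fun b ha ↦ mul_comm b _ ▸ Ideal.mul_mem_left _ b ha⟩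

/-- `Rn p k n` is the ring `R_k[x]/(x^n - 1)`; its ideals are the cyclic codes of length `n`. -/
abbrev Rn (p k n : ℕ) : Type :=
  Polynomial (Ru p k) ⧸ Ideal.span {(X : Polynomial (Ru p k)) ^ n - 1}

/-- The natural ring map `Z_p[x] → R_k[x]/(x^n - 1)`. -/
abbrev liftP (p k n : ℕ) : Polynomial (ZMod p) →+* Rn p k n :=
  (Ideal.Quotient.mk _).comp (mapRingHom (algebraMap (ZMod p) (Ru p k)))

/-- `u` as an element of `R_k[x]/(x^n - 1)`. -/
abbrev uu (p k n : ℕ) : Rn p k n := Ideal.Quotient.mk _ (C (uR p k))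

/-- `x` as an element of `R_k[x]/(x^n - 1)`. -/
abbrev xx (p k n : ℕ) : Rn p k n := Ideal.Quotient.mk _ (X : Polynomial (Ru p k))

section RnComm

abbrev rn_commRing (p k n : ℕ) : CommRing (Rn p k n) :=
  { (inferInstance : Ring (Rn p k n)) with
    mul_comm := fun a b => by
      obtain ⟨a, rfl⟩ := Ideal.Quotient.mk_surjective a
      obtain ⟨b, rfl⟩ := Ideal.Quotient.mk_surjective b
      rw [← map_mul, ← map_mul]; exact congrArg _ (mul_comm a b) }

attribute [local instance] rn_commRing

theorem quot_monic_eq_zero {S : Type*} [CommRing S] [Nontrivial S] {f F : S[X]}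
    (hf : f.Monic) (hd : F.degree < f.degree)
    (hz : Ideal.Quotient.mk (Ideal.span {f}) F = 0) : F = 0 := by
  rw [Ideal.Quotient.eq_zero_iff_mem, Ideal.mem_span_singleton] at hz
  obtain ⟨c, rfl⟩ := hz
  rcases eq_or_ne c 0 with rfl | hc
  · simp
  · exfalso
    rw [mul_comm, hf.degree_mul] at hd
    have h0 : (0 : WithBot ℕ) ≤ c.degree := zero_le_degree_iff.2 hc
    have h1 : f.degree + 0 ≤ f.degree + c.degree := add_le_add_right h0 _
    rw [add_zero] at h1
    rw [add_comm] at hd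
    exact absurd (lt_of_le_of_lt h1 hd) (lt_irrefl _)

instance ru_nontrivial (p : ℕ) [Fact p.Prime] : Nontrivial (Ru p 2) := by
  refine Ideal.Quotient.nontrivial_iff.mpr ?_
  rw [Ne, Ideal.span_singleton_eq_top]
  intro hu
  have := natDegree_eq_zero_of_isUnit hu
  simp at this

theorem ru_pair_zero (p : ℕ) [Fact p.Prime] {a b : ZMod p}
    (hz : algebraMap (ZMod p) (Ru p 2) a + uR p 2 * algebraMap (ZMod p) (Ru p 2) b = 0) :
    a = 0 ∧ b = 0 := by
  have h1 : algebraMap (ZMod p) (Ru p 2) a + uR p 2 * algebraMap (ZMod p) (Ru p 2) b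
      = Ideal.Quotient.mk _ (C a + X * C b) := by
    rw [map_add, map_mul]; rfl
  have h2 : (C a + X * C b : Polynomial (ZMod p)) = 0 := by
    refine quot_monic_eq_zero (monic_X_pow 2) ?_ (h1 ▸ hz)
    have hle : ((C a + X * C b : Polynomial (ZMod p))).degree ≤ 1 := by
      refine le_trans (degree_add_le _ _) (max_le (le_trans degree_C_le (by norm_num)) ?_)
      calc (X * C b : Polynomial (ZMod p)).degree ≤ 1 + 0 :=
            le_trans (degree_mul_le _ _) (add_le_add degree_X_le degree_C_le)
        _ = 1 := by norm_num
    calc ((C a + X * C b : Polynomial (ZMod p))).degree ≤ 1 := hle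
      _ < (X ^ 2 : Polynomial (ZMod p)).degree := by rw [degree_X_pow]; norm_num
  constructor
  · have := congrArg (fun q => Polynomial.coeff q 0) h2
    simpa using this
  · have := congrArg (fun q => Polynomial.coeff q 1) h2
    simpa using this

theorem ru_decomp (p : ℕ) [Fact p.Prime] (z : Ru p 2) :
    ∃ a b : ZMod p, z = algebraMap (ZMod p) (Ru p 2) a + algebraMap (ZMod p) (Ru p 2) b * uR p 2 := by
  obtain ⟨f, rfl⟩ := Ideal.Quotient.mk_surjective z
  refine ⟨(f %ₘ X ^ 2).coeff 0, (f %ₘ X ^ 2).coeff 1, ?_⟩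
  have hmod : Ideal.Quotient.mk (Ideal.span {(X : Polynomial (ZMod p)) ^ 2}) f
      = Ideal.Quotient.mk _ (f %ₘ X ^ 2) := by
    rw [Ideal.Quotient.mk_eq_mk_iff_sub_mem, modByMonic_eq_sub_mul_div f (X ^ 2),
      sub_sub_cancel, Ideal.mem_span_singleton]
    exact Dvd.intro _ rfl
  have hdeg : (f %ₘ X ^ 2).degree ≤ 1 := by
    have := degree_modByMonic_lt f (monic_X_pow (R := ZMod p) 2)
    rw [degree_X_pow] at this
    exact Order.le_of_lt_succ (by exact_mod_cast this)
  rw [hmod, show (Ideal.Quotient.mk (Ideal.span {(X : Polynomial (ZMod p)) ^ 2})) (f %ₘ X ^ 2)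
      = Ideal.Quotient.mk _ (C ((f %ₘ X ^ 2).coeff 1) * X + C ((f %ₘ X ^ 2).coeff 0))
      from congrArg _ (eq_X_add_C_of_degree_le_one hdeg), map_add, map_mul]
  show _ = Ideal.Quotient.mk _ _ + Ideal.Quotient.mk _ _ * Ideal.Quotient.mk _ _
  rw [← map_mul, ← map_add, ← map_mul, ← map_add]
  exact congrArg _ (by rw [Polynomial.algebraMap_eq]; ring)

theorem rn_monic (p n : ℕ) [Fact p.Prime] (hn : 0 < n) :
    ((X : Polynomial (Ru p 2)) ^ n - 1).Monic := by
  simpa using monic_X_pow_sub_C (1 : Ru p 2) hn.ne'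

theorem rn_deg (p n : ℕ) [Fact p.Prime] (hn : 0 < n) :
    ((X : Polynomial (Ru p 2)) ^ n - 1).degree = n := by
  simpa using degree_X_pow_sub_C hn (1 : Ru p 2)

theorem rn_pair_zero (p n : ℕ) [Fact p.Prime] (hn : 0 < n) {A B : Polynomial (ZMod p)}
    (hA : A.degree < (n : ℕ)) (hB : B.degree < (n : ℕ))
    (hz : liftP p 2 n A + uu p 2 n * liftP p 2 n B = 0) : A = 0 ∧ B = 0 := by
  set ι := algebraMap (ZMod p) (Ru p 2)
  set F : Polynomial (Ru p 2) := A.map ι + C (uR p 2) * B.map ι with hF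
  have h1 : liftP p 2 n A + uu p 2 n * liftP p 2 n B = Ideal.Quotient.mk _ F := by
    rw [hF, map_add, map_mul]; rfl
  have hdF : F.degree < ((X : Polynomial (Ru p 2)) ^ n - 1).degree := by
    rw [rn_deg p n hn]
    refine lt_of_le_of_lt (degree_add_le _ _) (max_lt ?_ ?_)
    · exact lt_of_le_of_lt (degree_map_le) hA
    · refine lt_of_le_of_lt (degree_mul_le _ _) ?_
      refine lt_of_le_of_lt (add_le_add degree_C_le degree_map_le) ?_
      simpa using hB
  have hF0 : F = 0 := quot_monic_eq_zero (rn_monic p n hn) hdF (h1 ▸ hz)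
  have hco : ∀ k, A.coeff k = 0 ∧ B.coeff k = 0 := by
    intro k
    have := congrArg (fun q => Polynomial.coeff q k) hF0
    simp only [hF, coeff_add, coeff_map, coeff_C_mul, coeff_zero] at this
    exact ru_pair_zero p (by simpa [Algebra.smul_def] using this)
  exact ⟨Polynomial.ext fun k => (hco k).1, Polynomial.ext fun k => (hco k).2⟩

theorem smul_mk (p n : ℕ) (c : Ru p 2) (z : Rn p 2 n) :
    c • z = Ideal.Quotient.mk _ (C c) * z := by
  obtain ⟨w, rfl⟩ := Ideal.Quotient.mk_surjective z
  rw [show c • (Ideal.Quotient.mk (Ideal.span {(X : Polynomial (Ru p 2)) ^ n - 1}) w : Rn p 2 n)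
      = Ideal.Quotient.mk _ (c • w) from rfl, smul_eq_C_mul, map_mul]

theorem liftP_X (p n : ℕ) : liftP p 2 n X = xx p 2 n := by simp [liftP]

theorem liftP_Xpow (p n k : ℕ) : liftP p 2 n (X ^ k) = xx p 2 n ^ k := by
  rw [map_pow, liftP_X]

theorem liftP_C (p n : ℕ) (c : ZMod p) :
    liftP p 2 n (C c) = Ideal.Quotient.mk _ (C (algebraMap (ZMod p) (Ru p 2) c)) := by
  simp [liftP]

theorem liftP_xn (p n : ℕ) : liftP p 2 n ((X : Polynomial (ZMod p)) ^ n - 1) = 0 := by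
  show Ideal.Quotient.mk _ (Polynomial.map _ _) = 0
  rw [Polynomial.map_sub, Polynomial.map_pow, map_X, Polynomial.map_one,
    Ideal.Quotient.eq_zero_iff_mem]
  exact Ideal.subset_span rfl

theorem uu_sq (p n : ℕ) : uu p 2 n * uu p 2 n = 0 := by
  have huR : uR p 2 * uR p 2 = 0 := by
    have h2 : uR p 2 * uR p 2 = Ideal.Quotient.mk _ ((X : Polynomial (ZMod p))^2) := by
      rw [← map_mul]; ring_nf
    rw [h2, Ideal.Quotient.eq_zero_iff_mem]
    exact Ideal.subset_span rfl
  show Ideal.Quotient.mk _ (C (uR p 2)) * Ideal.Quotient.mk _ (C (uR p 2)) = 0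
  rw [← map_mul, ← C_mul, huR]
  simp

theorem smul_term (p n : ℕ) (c : ZMod p) (z : Rn p 2 n) :
    (algebraMap (ZMod p) (Ru p 2) c) • z = liftP p 2 n (C c) * z := by
  rw [smul_mk, liftP_C]

theorem memL (p n : ℕ) (M : Submodule (Ru p 2) (Rn p 2 n)) (q : Polynomial (ZMod p))
    (w : Rn p 2 n) (hw : ∀ i ≤ q.natDegree, xx p 2 n ^ i * w ∈ M) :
    liftP p 2 n q * w ∈ M := by
  rw [show liftP p 2 n q
      = liftP p 2 n (∑ i ∈ Finset.range (q.natDegree + 1), (monomial i) (q.coeff i))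
      from congrArg _ q.as_sum_range, map_sum, Finset.sum_mul]
  refine Submodule.sum_mem _ ?_
  intro i hi
  have h1 : liftP p 2 n (monomial i (q.coeff i)) * w
      = (algebraMap (ZMod p) (Ru p 2) (q.coeff i)) • (xx p 2 n ^ i * w) := by
    rw [smul_term, ← C_mul_X_pow_eq_monomial, map_mul, liftP_Xpow, mul_assoc]
  rw [h1]
  exact Submodule.smul_mem _ _ (hw i (by simpa using Nat.lt_succ_iff.mp (Finset.mem_range.mp hi)))

theorem sum_fin (p n k : ℕ) (α : Fin k → ZMod p) (w : Rn p 2 n) :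
    (∑ i : Fin k, (algebraMap (ZMod p) (Ru p 2) (α i)) • (xx p 2 n ^ (i : ℕ) * w))
      = liftP p 2 n (∑ i : Fin k, C (α i) * X ^ (i : ℕ)) * w := by
  rw [map_sum, Finset.sum_mul]
  refine Finset.sum_congr rfl fun i _ => ?_
  rw [smul_term, map_mul, liftP_Xpow, mul_assoc]

theorem apoly_degree (p k : ℕ) (α : Fin k → ZMod p) :
    (∑ i : Fin k, C (α i) * X ^ (i : ℕ) : Polynomial (ZMod p)).degree < (k : ℕ) := by
  refine lt_of_le_of_lt (degree_sum_le _ _) ?_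
  rw [Finset.sup_lt_iff (by exact_mod_cast WithBot.bot_lt_coe k)]
  intro i _
  refine lt_of_le_of_lt (degree_mul_le _ _) ?_
  refine lt_of_le_of_lt (add_le_add degree_C_le (degree_X_pow_le _)) ?_
  rw [zero_add]
  exact_mod_cast i.isLt

theorem apoly_coeff (p k : ℕ) (α : Fin k → ZMod p) (j : Fin k) :
    (∑ i : Fin k, C (α i) * X ^ (i : ℕ) : Polynomial (ZMod p)).coeff (j : ℕ) = α j := by
  rw [finset_sum_coeff]
  rw [Finset.sum_eq_single j]
  · simp
  · intro i _ hij
    rw [coeff_C_mul, coeff_X_pow, if_neg (by simpa [Fin.val_eq_val] using (Ne.symm hij)), mul_zero]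
  · simp


section Aux

variable (p n r t : ℕ)

theorem L_term_c [Fact p.Prime] (g pp : Polynomial (ZMod p)) (aa bb : ZMod p) (i : ℕ) :
    (algebraMap (ZMod p) (Ru p 2) aa + algebraMap (ZMod p) (Ru p 2) bb * uR p 2)
        • (xx p 2 n ^ i * (liftP p 2 n g + uu p 2 n * liftP p 2 n pp))
      = (algebraMap (ZMod p) (Ru p 2) aa)
          • (xx p 2 n ^ i * (liftP p 2 n g + uu p 2 n * liftP p 2 n pp))
        + (algebraMap (ZMod p) (Ru p 2) bb)
            • (xx p 2 n ^ i * (uu p 2 n * liftP p 2 n g)) := by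
  rw [add_smul, mul_smul]
  congr 1
  rw [smul_mk p n (uR p 2)]
  congr 1
  have h1 : Ideal.Quotient.mk (Ideal.span {(X : Polynomial (Ru p 2)) ^ n - 1}) (C (uR p 2))
      * (xx p 2 n ^ i * (liftP p 2 n g + uu p 2 n * liftP p 2 n pp))
      = xx p 2 n ^ i * (uu p 2 n * liftP p 2 n g)
        + (uu p 2 n * uu p 2 n) * (xx p 2 n ^ i * liftP p 2 n pp) := by
    ring
  rw [h1, uu_sq, zero_mul, add_zero]

theorem L_term_d [Fact p.Prime] (a : Polynomial (ZMod p)) (aa bb : ZMod p) (j : ℕ) :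
    (algebraMap (ZMod p) (Ru p 2) aa + algebraMap (ZMod p) (Ru p 2) bb * uR p 2)
        • (xx p 2 n ^ j * (uu p 2 n * liftP p 2 n a))
      = (algebraMap (ZMod p) (Ru p 2) aa) • (xx p 2 n ^ j * (uu p 2 n * liftP p 2 n a)) := by
  rw [add_smul, mul_smul, smul_mk p n (uR p 2)]
  have h1 : Ideal.Quotient.mk (Ideal.span {(X : Polynomial (Ru p 2)) ^ n - 1}) (C (uR p 2))
      * (xx p 2 n ^ j * (uu p 2 n * liftP p 2 n a))
      = (uu p 2 n * uu p 2 n) * (xx p 2 n ^ j * liftP p 2 n a) := by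
    ring
  rw [h1, uu_sq, zero_mul, smul_zero, add_zero]

theorem L_nf (k l : ℕ) (g pp a : Polynomial (ZMod p))
    (al be : Fin k → ZMod p) (ga : Fin l → ZMod p) :
    (∑ i, (algebraMap (ZMod p) (Ru p 2) (al i))
        • (xx p 2 n ^ (i : ℕ) * (liftP p 2 n g + uu p 2 n * liftP p 2 n pp)))
      + (∑ i, (algebraMap (ZMod p) (Ru p 2) (be i))
          • (xx p 2 n ^ (i : ℕ) * (uu p 2 n * liftP p 2 n g)))
      + (∑ j, (algebraMap (ZMod p) (Ru p 2) (ga j))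
          • (xx p 2 n ^ (j : ℕ) * (uu p 2 n * liftP p 2 n a)))
    = liftP p 2 n ((∑ i, C (al i) * X ^ (i : ℕ)) * g)
      + uu p 2 n * liftP p 2 n ((∑ i, C (al i) * X ^ (i : ℕ)) * pp
          + (∑ i, C (be i) * X ^ (i : ℕ)) * g + (∑ j, C (ga j) * X ^ (j : ℕ)) * a) := by
  rw [sum_fin, sum_fin, sum_fin]
  rw [map_mul, map_add, map_add, map_mul, map_mul, map_mul]
  ring

theorem L_zero [Fact p.Prime] (hn : 0 < n) (g pp a : Polynomial (ZMod p))
    (hg0 : g ≠ 0) (ha0 : a ≠ 0) (hgdeg : g.degree = (r : ℕ)) (hadeg : a.degree = (t : ℕ))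
    (hrle : r ≤ n) (htr : t ≤ r)
    (al be : Fin (n - r) → ZMod p) (ga : Fin (r - t) → ZMod p)
    (hz0 : liftP p 2 n ((∑ i, C (al i) * X ^ (i : ℕ)) * g)
        + uu p 2 n * liftP p 2 n ((∑ i, C (al i) * X ^ (i : ℕ)) * pp
            + (∑ i, C (be i) * X ^ (i : ℕ)) * g + (∑ j, C (ga j) * X ^ (j : ℕ)) * a) = 0) :
    al = 0 ∧ be = 0 ∧ ga = 0 := by
  set A : Polynomial (ZMod p) := ∑ i, C (al i) * X ^ (i : ℕ) with hA
  set Bq : Polynomial (ZMod p) := ∑ i, C (be i) * X ^ (i : ℕ) with hBq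
  set Gq : Polynomial (ZMod p) := ∑ j, C (ga j) * X ^ (j : ℕ) with hGq
  have hdegA : A.degree < ((n - r : ℕ) : WithBot ℕ) := apoly_degree p _ al
  have hdegBq : Bq.degree < ((n - r : ℕ) : WithBot ℕ) := apoly_degree p _ be
  have hdegGq : Gq.degree < ((r - t : ℕ) : WithBot ℕ) := apoly_degree p _ ga
  have hmulg : ∀ q : Polynomial (ZMod p), q.degree < ((n - r : ℕ) : WithBot ℕ)
      → (q * g).degree < ((n : ℕ) : WithBot ℕ) := by
    intro q hq
    refine lt_of_le_of_lt (degree_mul_le _ _) ?_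
    rw [hgdeg]
    calc q.degree + ((r : ℕ) : WithBot ℕ)
        < ((n - r : ℕ) : WithBot ℕ) + ((r : ℕ) : WithBot ℕ) :=
          WithBot.add_lt_add_right (by exact WithBot.coe_ne_bot) hq
      _ = ((n : ℕ) : WithBot ℕ) := by
          rw [← Nat.cast_add]
          congr 1
          omega
  have hGa_deg : (Gq * a).degree < ((r : ℕ) : WithBot ℕ) := by
    refine lt_of_le_of_lt (degree_mul_le _ _) ?_
    rw [hadeg]
    calc Gq.degree + ((t : ℕ) : WithBot ℕ)
        < ((r - t : ℕ) : WithBot ℕ) + ((t : ℕ) : WithBot ℕ) :=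
          WithBot.add_lt_add_right (by exact WithBot.coe_ne_bot) hdegGq
      _ = ((r : ℕ) : WithBot ℕ) := by
          rw [← Nat.cast_add]
          congr 1
          omega
  have hrn_le : ((r : ℕ) : WithBot ℕ) ≤ ((n : ℕ) : WithBot ℕ) := by
    exact_mod_cast hrle
  have hu0 : uu p 2 n * liftP p 2 n (A * g) = 0 := by
    have h1 : uu p 2 n * (liftP p 2 n (A * g)
        + uu p 2 n * liftP p 2 n (A * pp + Bq * g + Gq * a)) = 0 := by
      rw [hz0, mul_zero]
    calc uu p 2 n * liftP p 2 n (A * g)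
        = uu p 2 n * (liftP p 2 n (A * g)
            + uu p 2 n * liftP p 2 n (A * pp + Bq * g + Gq * a))
          - (uu p 2 n * uu p 2 n) * liftP p 2 n (A * pp + Bq * g + Gq * a) := by ring
      _ = 0 := by rw [h1, uu_sq, zero_mul, sub_zero]
  have hAg0 : A * g = 0 := by
    refine (rn_pair_zero p n hn (A := 0) (B := A * g) ?_ (hmulg A hdegA) ?_).2
    · rw [degree_zero]
      exact_mod_cast WithBot.bot_lt_coe n
    · rw [map_zero, zero_add]
      exact hu0
  have hA0 : A = 0 := by
    rcases mul_eq_zero.mp hAg0 with h0 | h0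
    · exact h0
    · exact absurd h0 hg0
  have hal : al = 0 := by
    funext j
    have hcf := apoly_coeff p (n - r) al j
    rw [show (∑ i, C (al i) * X ^ (i : ℕ) : Polynomial (ZMod p)) = A from hA.symm, hA0] at hcf
    simpa using hcf.symm
  rw [hA0, zero_mul, zero_mul, zero_add, map_zero, zero_add] at hz0
  have hBG0 : Bq * g + Gq * a = 0 := by
    refine (rn_pair_zero p n hn (A := 0) (B := Bq * g + Gq * a) ?_ ?_ ?_).2
    · rw [degree_zero]
      exact_mod_cast WithBot.bot_lt_coe n
    · refine lt_of_le_of_lt (degree_add_le _ _) (max_lt (hmulg Bq hdegBq) ?_)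
      exact lt_of_lt_of_le hGa_deg hrn_le
    · rw [map_zero, zero_add]
      exact hz0
  have hB0 : Bq = 0 := by
    by_contra hne
    have hd1 : (Bq * g).degree = Bq.degree + ((r : ℕ) : WithBot ℕ) := by
      rw [degree_mul, hgdeg]
    have hge : ((r : ℕ) : WithBot ℕ) ≤ (Bq * g).degree := by
      rw [hd1]
      calc ((r : ℕ) : WithBot ℕ) = 0 + ((r : ℕ) : WithBot ℕ) := by rw [zero_add]
        _ ≤ Bq.degree + ((r : ℕ) : WithBot ℕ) :=
          add_le_add_left (zero_le_degree_iff.2 hne) _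
    have hlt : (Bq * g).degree < ((r : ℕ) : WithBot ℕ) := by
      have heq : Bq * g = -(Gq * a) := eq_neg_of_add_eq_zero_left hBG0
      rw [heq, degree_neg]
      exact hGa_deg
    exact absurd (lt_of_le_of_lt hge hlt) (lt_irrefl _)
  have hGq0 : Gq = 0 := by
    have h1 : Gq * a = 0 := by
      rw [hB0, zero_mul, zero_add] at hBG0
      exact hBG0
    rcases mul_eq_zero.mp h1 with h0 | h0
    · exact h0
    · exact absurd h0 ha0
  have hbe : be = 0 := by
    funext j
    have hcf := apoly_coeff p (n - r) be j
    rw [show (∑ i, C (be i) * X ^ (i : ℕ) : Polynomial (ZMod p)) = Bq from hBq.symm, hB0] at hcf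
    simpa using hcf.symm
  have hga0 : ga = 0 := by
    funext j
    have hcf := apoly_coeff p (r - t) ga j
    rw [show (∑ i, C (ga i) * X ^ (i : ℕ) : Polynomial (ZMod p)) = Gq from hGq.symm, hGq0] at hcf
    simpa using hcf.symm
  exact ⟨hal, hbe, hga0⟩

end Aux

theorem L_span (p n r t : ℕ) (hp : p.Prime) (hn : 0 < n)
    (g pp a h : Polynomial (ZMod p))
    (hmg : g.Monic) (hma : a.Monic) (hdg : g.natDegree = r) (hda : a.natDegree = t)
    (htr : t ≤ r) (hag : a ∣ g) (hgh : g * h = (X : Polynomial (ZMod p)) ^ n - 1)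
    (hap : a ∣ pp * h) :
    Submodule.span (Ru p 2)
        ({c | ∃ i < n - r, c = xx p 2 n ^ i * (liftP p 2 n g + uu p 2 n * liftP p 2 n pp)} ∪
         {c | ∃ j < r - t, c = xx p 2 n ^ j * (uu p 2 n * liftP p 2 n a)} : Set (Rn p 2 n)) =
      (Ideal.span {liftP p 2 n g + uu p 2 n * liftP p 2 n pp,
        uu p 2 n * liftP p 2 n a}).restrictScalars (Ru p 2) := by
  haveI : Fact p.Prime := ⟨hp⟩
  set Ck : Ideal (Rn p 2 n) := Ideal.span {liftP p 2 n g + uu p 2 n * liftP p 2 n pp,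
    uu p 2 n * liftP p 2 n a} with hC
  -- basic facts
  have hXn_ne : ((X : Polynomial (ZMod p)) ^ n - 1) ≠ 0 := by
    intro h0
    have := natDegree_X_pow_sub_C (R := ZMod p) (n := n) (r := 1)
    rw [show ((X : Polynomial (ZMod p)) ^ n - C 1) = X ^ n - 1 by simp, h0] at this
    simp at this
    omega
  have hg0 : g ≠ 0 := hmg.ne_zero
  have ha0 : a ≠ 0 := hma.ne_zero
  have hh0 : h ≠ 0 := by
    intro h0
    rw [h0, mul_zero] at hgh
    exact hXn_ne hgh.symm
  have hmh : h.Monic := by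
    have h1 : g.leadingCoeff * h.leadingCoeff = 1 := by
      rw [← leadingCoeff_mul, hgh]
      simpa using (monic_X_pow_sub_C (1 : ZMod p) hn.ne').leadingCoeff
    rwa [hmg.leadingCoeff, one_mul] at h1
  have hrn : r + h.natDegree = n := by
    have h1 := natDegree_mul hg0 hh0
    rw [hgh] at h1
    rw [show ((X : Polynomial (ZMod p)) ^ n - 1) = X ^ n - C 1 by simp,
      natDegree_X_pow_sub_C] at h1
    omega
  have hrle : r ≤ n := by omega
  have hdh : h.natDegree = n - r := by omega
  obtain ⟨b, hb⟩ := hag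
  have hb0 : b ≠ 0 := by
    intro h0; rw [h0, mul_zero] at hb; exact hg0 hb
  have hmb : b.Monic := by
    have h1 : a.leadingCoeff * b.leadingCoeff = 1 := by
      rw [← leadingCoeff_mul, ← hb, hmg.leadingCoeff]
    rwa [hma.leadingCoeff, one_mul] at h1
  have hdb : b.natDegree = r - t := by
    have h1 := natDegree_mul ha0 hb0
    rw [← hb, hdg, hda] at h1
    omega
  obtain ⟨s, hs⟩ := hap
  have hgdeg : g.degree = (r : ℕ) := by rw [degree_eq_natDegree hg0, hdg]
  have hadeg : a.degree = (t : ℕ) := by rw [degree_eq_natDegree ha0, hda]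
  set G : Rn p 2 n := liftP p 2 n g + uu p 2 n * liftP p 2 n pp with hG
  set uA : Rn p 2 n := uu p 2 n * liftP p 2 n a with huA
  set Bset : Set (Rn p 2 n) :=
    ({c | ∃ i < n - r, c = xx p 2 n ^ i * G} ∪ {c | ∃ j < r - t, c = xx p 2 n ^ j * uA}) with hBs
  set M : Submodule (Ru p 2) (Rn p 2 n) := Submodule.span (Ru p 2) Bset with hM
  -- claim P : u x^m g ∈ M
  have hP : ∀ m : ℕ, uu p 2 n * (xx p 2 n ^ m * liftP p 2 n g) ∈ M := by
    intro m
    induction m using Nat.strong_induction_on with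
    | _ m ih =>
      by_cases hm : m < n - r
      · have h1 : xx p 2 n ^ m * G ∈ M :=
          Submodule.subset_span (Or.inl ⟨m, hm, rfl⟩)
        have h2 := M.smul_mem (uR p 2) h1
        rw [smul_mk] at h2
        have h3 : Ideal.Quotient.mk _ (C (uR p 2)) * (xx p 2 n ^ m * G)
            = uu p 2 n * (xx p 2 n ^ m * liftP p 2 n g)
              + (uu p 2 n * uu p 2 n) * (xx p 2 n ^ m * liftP p 2 n pp) := by
          rw [hG]; ring
        rw [h3, uu_sq, zero_mul, add_zero] at h2
        exact h2
      · by_cases hnr : n - r = 0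
        · have hh1 : h = 1 := hmh.natDegree_eq_zero.mp (by omega)
          have hgx : g = (X : Polynomial (ZMod p)) ^ n - 1 := by
            rw [← hgh, hh1, mul_one]
          rw [hgx, liftP_xn, mul_zero, mul_zero]
          exact M.zero_mem
        · set e : Polynomial (ZMod p) := X ^ (n - r) - h with he_def
          have hXk0 : (X : Polynomial (ZMod p)) ^ (n - r) ≠ 0 := pow_ne_zero _ X_ne_zero
          have he : e.degree < ((n - r : ℕ) : WithBot ℕ) := by
            rw [he_def]
            have h1 : ((X : Polynomial (ZMod p)) ^ (n - r)).degree = h.degree := by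
              rw [degree_X_pow, degree_eq_natDegree hh0, hdh]
            have := degree_sub_lt h1 hXk0 (by
              rw [(monic_X_pow (n - r)).leadingCoeff, hmh.leadingCoeff])
            rwa [degree_X_pow] at this
          have hkey : xx p 2 n ^ (n - r) * liftP p 2 n g = liftP p 2 n e * liftP p 2 n g := by
            rw [← liftP_Xpow, ← map_mul, ← map_mul]
            have h1 : (X : Polynomial (ZMod p)) ^ (n - r) * g
                = e * g + ((X : Polynomial (ZMod p)) ^ n - 1) := by
              rw [he_def, ← hgh]; ring
            rw [h1, map_add, liftP_xn, add_zero]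
          set m' : ℕ := m - (n - r) with hm'd
          have h4 : uu p 2 n * (xx p 2 n ^ m * liftP p 2 n g)
              = liftP p 2 n e * (uu p 2 n * (xx p 2 n ^ m' * liftP p 2 n g)) := by
            calc uu p 2 n * (xx p 2 n ^ m * liftP p 2 n g)
                = uu p 2 n * (xx p 2 n ^ m'
                    * (xx p 2 n ^ (n - r) * liftP p 2 n g)) := by
                  rw [show m = m' + (n - r) by omega, pow_add]; ring
              _ = uu p 2 n * (xx p 2 n ^ m'
                    * (liftP p 2 n e * liftP p 2 n g)) := by rw [hkey]
              _ = _ := by ring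
          rw [h4]
          refine memL p n M e _ ?_
          intro i hi
          have h5 : xx p 2 n ^ i * (uu p 2 n * (xx p 2 n ^ m' * liftP p 2 n g))
              = uu p 2 n * (xx p 2 n ^ (m' + i) * liftP p 2 n g) := by
            rw [pow_add]; ring
          rw [h5]
          refine ih _ ?_
          rcases eq_or_ne e 0 with h0 | h0
          · rw [h0] at hi; simp at hi; omega
          · have := (natDegree_lt_iff_degree_lt h0).2 he
            omega
  -- claim Q : u x^m a ∈ M
  have hQ : ∀ m : ℕ, uu p 2 n * (xx p 2 n ^ m * liftP p 2 n a) ∈ M := by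
    intro m
    induction m using Nat.strong_induction_on with
    | _ m ih =>
      by_cases hm : m < r - t
      · have h1 : xx p 2 n ^ m * uA ∈ M :=
          Submodule.subset_span (Or.inr ⟨m, hm, rfl⟩)
        have h3 : xx p 2 n ^ m * uA = uu p 2 n * (xx p 2 n ^ m * liftP p 2 n a) := by
          rw [huA]; ring
        rwa [h3] at h1
      · by_cases hrt : r - t = 0
        · have hb1 : b = 1 := hmb.natDegree_eq_zero.mp (by omega)
          have hga : g = a := by rw [hb, hb1, mul_one]
          rw [show a = g from hga.symm]
          exact hP m
        · set e' : Polynomial (ZMod p) := X ^ (r - t) - b with he'_def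
          have hXk0 : (X : Polynomial (ZMod p)) ^ (r - t) ≠ 0 := pow_ne_zero _ X_ne_zero
          have he' : e'.degree < ((r - t : ℕ) : WithBot ℕ) := by
            rw [he'_def]
            have h1 : ((X : Polynomial (ZMod p)) ^ (r - t)).degree = b.degree := by
              rw [degree_X_pow, degree_eq_natDegree hb0, hdb]
            have := degree_sub_lt h1 hXk0 (by
              rw [(monic_X_pow (r - t)).leadingCoeff, hmb.leadingCoeff])
            rwa [degree_X_pow] at this
          have hkey : xx p 2 n ^ (r - t) * liftP p 2 n a
              = liftP p 2 n g + liftP p 2 n e' * liftP p 2 n a := by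
            rw [← liftP_Xpow, ← map_mul, ← map_mul, ← map_add]
            congr 1
            rw [he'_def, hb]; ring
          set m' : ℕ := m - (r - t) with hm'd
          have h4 : uu p 2 n * (xx p 2 n ^ m * liftP p 2 n a)
              = uu p 2 n * (xx p 2 n ^ m' * liftP p 2 n g)
                + liftP p 2 n e' * (uu p 2 n * (xx p 2 n ^ m' * liftP p 2 n a)) := by
            calc uu p 2 n * (xx p 2 n ^ m * liftP p 2 n a)
                = uu p 2 n * (xx p 2 n ^ m'
                    * (xx p 2 n ^ (r - t) * liftP p 2 n a)) := by
                  rw [show m = m' + (r - t) by omega, pow_add]; ring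
              _ = uu p 2 n * (xx p 2 n ^ m'
                    * (liftP p 2 n g + liftP p 2 n e' * liftP p 2 n a)) := by rw [hkey]
              _ = _ := by ring
          rw [h4]
          refine M.add_mem (hP _) ?_
          refine memL p n M e' _ ?_
          intro i hi
          have h5 : xx p 2 n ^ i * (uu p 2 n * (xx p 2 n ^ m' * liftP p 2 n a))
              = uu p 2 n * (xx p 2 n ^ (m' + i) * liftP p 2 n a) := by
            rw [pow_add]; ring
          rw [h5]
          refine ih _ ?_
          rcases eq_or_ne e' 0 with h0 | h0
          · rw [h0] at hi; simp at hi; omega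
          · have := (natDegree_lt_iff_degree_lt h0).2 he'
            omega
  -- claim B : x^m G ∈ M
  have hBB : ∀ m : ℕ, xx p 2 n ^ m * G ∈ M := by
    intro m
    induction m using Nat.strong_induction_on with
    | _ m ih =>
      by_cases hm : m < n - r
      · exact Submodule.subset_span (Or.inl ⟨m, hm, rfl⟩)
      · by_cases hnr : n - r = 0
        · have hh1 : h = 1 := hmh.natDegree_eq_zero.mp (by omega)
          have hgx : g = (X : Polynomial (ZMod p)) ^ n - 1 := by
            rw [← hgh, hh1, mul_one]
          have hps : pp = a * s := by rw [← hs, hh1, mul_one]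
          have h6 : xx p 2 n ^ m * G
              = liftP p 2 n s * (uu p 2 n * (xx p 2 n ^ m * liftP p 2 n a)) := by
            rw [hG, hgx, liftP_xn, hps, map_mul]; ring
          rw [h6]
          refine memL p n M s _ ?_
          intro i hi
          have h5 : xx p 2 n ^ i * (uu p 2 n * (xx p 2 n ^ m * liftP p 2 n a))
              = uu p 2 n * (xx p 2 n ^ (m + i) * liftP p 2 n a) := by
            rw [pow_add]; ring
          rw [h5]; exact hQ _
        · set e : Polynomial (ZMod p) := X ^ (n - r) - h with he_def
          have hXk0 : (X : Polynomial (ZMod p)) ^ (n - r) ≠ 0 := pow_ne_zero _ X_ne_zero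
          have he : e.degree < ((n - r : ℕ) : WithBot ℕ) := by
            rw [he_def]
            have h1 : ((X : Polynomial (ZMod p)) ^ (n - r)).degree = h.degree := by
              rw [degree_X_pow, degree_eq_natDegree hh0, hdh]
            have := degree_sub_lt h1 hXk0 (by
              rw [(monic_X_pow (n - r)).leadingCoeff, hmh.leadingCoeff])
            rwa [degree_X_pow] at this
          -- x^{n-r} * G = liftP e * G + u * (x^0 * liftP (a*s))-ish
          have hkey : xx p 2 n ^ (n - r) * G
              = liftP p 2 n e * G + uu p 2 n * liftP p 2 n (a * s) := by
            rw [hG, ← liftP_Xpow, ← hs]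
            have h1 : (X : Polynomial (ZMod p)) ^ (n - r) * g
                = e * g + ((X : Polynomial (ZMod p)) ^ n - 1) := by
              rw [he_def, ← hgh]; ring
            have h2 : (X : Polynomial (ZMod p)) ^ (n - r) * pp
                = e * pp + pp * h := by
              rw [he_def]; ring
            calc liftP p 2 n (X ^ (n - r)) * (liftP p 2 n g + uu p 2 n * liftP p 2 n pp)
                = liftP p 2 n (X ^ (n - r) * g)
                  + uu p 2 n * liftP p 2 n (X ^ (n - r) * pp) := by
                  rw [map_mul, map_mul]; ring
              _ = liftP p 2 n (e * g) + uu p 2 n * (liftP p 2 n (e * pp) + liftP p 2 n (pp * h)) := by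
                  rw [h1, h2, map_add, map_add, liftP_xn, add_zero]
              _ = _ := by rw [map_mul, map_mul, map_mul]; ring
          set m' : ℕ := m - (n - r) with hm'd
          have h4 : xx p 2 n ^ m * G
              = liftP p 2 n e * (xx p 2 n ^ m' * G)
                + liftP p 2 n s * (uu p 2 n * (xx p 2 n ^ m' * liftP p 2 n a)) := by
            calc xx p 2 n ^ m * G
                = xx p 2 n ^ m' * (xx p 2 n ^ (n - r) * G) := by
                  rw [show m = m' + (n - r) by omega, pow_add]; ring
              _ = xx p 2 n ^ m'
                  * (liftP p 2 n e * G + uu p 2 n * liftP p 2 n (a * s)) := by rw [hkey]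
              _ = _ := by rw [map_mul]; ring
          rw [h4]
          refine M.add_mem ?_ ?_
          · refine memL p n M e _ ?_
            intro i hi
            have h5 : xx p 2 n ^ i * (xx p 2 n ^ m' * G)
                = xx p 2 n ^ (m' + i) * G := by
              rw [pow_add]; ring
            rw [h5]
            refine ih _ ?_
            rcases eq_or_ne e 0 with h0 | h0
            · rw [h0] at hi; simp at hi; omega
            · have := (natDegree_lt_iff_degree_lt h0).2 he
              omega
          · refine memL p n M s _ ?_
            intro i hi
            have h5 : xx p 2 n ^ i * (uu p 2 n * (xx p 2 n ^ m' * liftP p 2 n a))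
                = uu p 2 n * (xx p 2 n ^ (m' + i) * liftP p 2 n a) := by
              rw [pow_add]; ring
            rw [h5]; exact hQ _
  -- span equality
  have hspan : M = Ck.restrictScalars (Ru p 2) := by
    apply le_antisymm
    · rw [hM, Submodule.span_le]
      rintro z (⟨i, hi, rfl⟩ | ⟨j, hj, rfl⟩)
      · show xx p 2 n ^ i * G ∈ Ck
        rw [hC]
        exact Ideal.mul_mem_left _ _ (Ideal.subset_span (by left; rfl))
      · show xx p 2 n ^ j * uA ∈ Ck
        rw [hC]
        exact Ideal.mul_mem_left _ _ (Ideal.subset_span (by right; rfl))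
    · have hmul1 : ∀ f₁ : Rn p 2 n, f₁ * G ∈ M := by
        intro f₁
        obtain ⟨F₁, rfl⟩ := Ideal.Quotient.mk_surjective f₁
        induction F₁ using Polynomial.induction_on' with
        | add q1 q2 hq1 hq2 => rw [map_add, add_mul]; exact M.add_mem hq1 hq2
        | monomial m c =>
          have h1 : (Ideal.Quotient.mk (Ideal.span {(X : Polynomial (Ru p 2)) ^ n - 1}))
              (monomial m c) * G = c • (xx p 2 n ^ m * G) := by
            rw [smul_mk, ← C_mul_X_pow_eq_monomial, map_mul, map_pow, mul_assoc]
          rw [h1]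
          exact M.smul_mem _ (hBB m)
      have hmul2 : ∀ f₂ : Rn p 2 n, f₂ * uA ∈ M := by
        intro f₂
        obtain ⟨F₂, rfl⟩ := Ideal.Quotient.mk_surjective f₂
        induction F₂ using Polynomial.induction_on' with
        | add q1 q2 hq1 hq2 => rw [map_add, add_mul]; exact M.add_mem hq1 hq2
        | monomial m c =>
          have h1 : (Ideal.Quotient.mk (Ideal.span {(X : Polynomial (Ru p 2)) ^ n - 1}))
              (monomial m c) * uA
              = c • (uu p 2 n * (xx p 2 n ^ m * liftP p 2 n a)) := by
            rw [huA, smul_mk, ← C_mul_X_pow_eq_monomial, map_mul, map_pow, mul_assoc]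
            show _ * (xx p 2 n ^ m * _) = _
            ring
          rw [h1]
          exact M.smul_mem _ (hQ m)
      intro z hz
      have hz' : z ∈ Ck := hz
      rw [hC, Ideal.mem_span_pair] at hz'
      obtain ⟨f₁, f₂, rfl⟩ := hz'
      exact M.add_mem (hmul1 f₁) (hmul2 f₂)
  exact hspan

theorem L_card (p n r t : ℕ) (hp : p.Prime) (hn : 0 < n)
    (g pp a h : Polynomial (ZMod p))
    (hmg : g.Monic) (hma : a.Monic) (hdg : g.natDegree = r) (hda : a.natDegree = t)
    (htr : t ≤ r) (hag : a ∣ g) (hgh : g * h = (X : Polynomial (ZMod p)) ^ n - 1)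
    (hap : a ∣ pp * h) :
    Nat.card (Ideal.span {liftP p 2 n g + uu p 2 n * liftP p 2 n pp,
      uu p 2 n * liftP p 2 n a} : Ideal (Rn p 2 n)) = p ^ (2 * n - r - t) := by
  haveI : Fact p.Prime := ⟨hp⟩
  haveI : NeZero p := ⟨hp.pos.ne'⟩
  set Ck : Ideal (Rn p 2 n) := Ideal.span {liftP p 2 n g + uu p 2 n * liftP p 2 n pp,
    uu p 2 n * liftP p 2 n a} with hC
  set G : Rn p 2 n := liftP p 2 n g + uu p 2 n * liftP p 2 n pp with hG
  set uA : Rn p 2 n := uu p 2 n * liftP p 2 n a with huA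
  -- basic degree facts
  have hXn_ne : ((X : Polynomial (ZMod p)) ^ n - 1) ≠ 0 := by
    intro h0
    have := natDegree_X_pow_sub_C (R := ZMod p) (n := n) (r := 1)
    rw [show ((X : Polynomial (ZMod p)) ^ n - C 1) = X ^ n - 1 by simp, h0] at this
    simp at this
    omega
  have hg0 : g ≠ 0 := hmg.ne_zero
  have ha0 : a ≠ 0 := hma.ne_zero
  have hh0 : h ≠ 0 := by
    intro h0
    rw [h0, mul_zero] at hgh
    exact hXn_ne hgh.symm
  have hrn : r + h.natDegree = n := by
    have h1 := natDegree_mul hg0 hh0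
    rw [hgh] at h1
    rw [show ((X : Polynomial (ZMod p)) ^ n - 1) = X ^ n - C 1 by simp,
      natDegree_X_pow_sub_C] at h1
    omega
  have hrle : r ≤ n := by omega
  have hgdeg : g.degree = (r : ℕ) := by rw [degree_eq_natDegree hg0, hdg]
  have hadeg : a.degree = (t : ℕ) := by rw [degree_eq_natDegree ha0, hda]
  have hspan := L_span p n r t hp hn g pp a h hmg hma hdg hda htr hag hgh hap
  set Bset : Set (Rn p 2 n) :=
    ({c | ∃ i < n - r, c = xx p 2 n ^ i * G} ∪ {c | ∃ j < r - t, c = xx p 2 n ^ j * uA}) with hBs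
  set M : Submodule (Ru p 2) (Rn p 2 n) := Submodule.span (Ru p 2) Bset with hM
  choose piz pio hpi using ru_decomp p
  have hcomb : ∀ (c : Fin (n - r) → Ru p 2) (d : Fin (r - t) → Ru p 2),
      (∑ i, c i • (xx p 2 n ^ (i : ℕ) * G)) + (∑ j, d j • (xx p 2 n ^ (j : ℕ) * uA))
      = (∑ i, (algebraMap (ZMod p) (Ru p 2) (piz (c i))) • (xx p 2 n ^ (i : ℕ) * G))
        + (∑ i, (algebraMap (ZMod p) (Ru p 2) (pio (c i)))
            • (xx p 2 n ^ (i : ℕ) * (uu p 2 n * liftP p 2 n g)))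
        + (∑ j, (algebraMap (ZMod p) (Ru p 2) (piz (d j))) • (xx p 2 n ^ (j : ℕ) * uA)) := by
    intro c d
    rw [show (∑ i, c i • (xx p 2 n ^ (i : ℕ) * G))
        = ∑ i, ((algebraMap (ZMod p) (Ru p 2) (piz (c i))) • (xx p 2 n ^ (i : ℕ) * G)
            + (algebraMap (ZMod p) (Ru p 2) (pio (c i)))
              • (xx p 2 n ^ (i : ℕ) * (uu p 2 n * liftP p 2 n g)))
        from Finset.sum_congr rfl fun i _ => by
          rw [hG, ← L_term_c p n g pp (piz (c i)) (pio (c i)) (i : ℕ), ← hpi (c i)],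
      show (∑ j, d j • (xx p 2 n ^ (j : ℕ) * uA))
        = ∑ j, (algebraMap (ZMod p) (Ru p 2) (piz (d j))) • (xx p 2 n ^ (j : ℕ) * uA)
        from Finset.sum_congr rfl fun j _ => by
          rw [huA, ← L_term_d p n a (piz (d j)) (pio (d j)) (j : ℕ), ← hpi (d j)],
      Finset.sum_add_distrib]
  set Psi : ((Fin (n - r) → ZMod p) × (Fin (n - r) → ZMod p) × (Fin (r - t) → ZMod p))
      → Rn p 2 n := fun vv =>
    (∑ i, (algebraMap (ZMod p) (Ru p 2) (vv.1 i)) • (xx p 2 n ^ (i : ℕ) * G))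
      + (∑ i, (algebraMap (ZMod p) (Ru p 2) (vv.2.1 i))
          • (xx p 2 n ^ (i : ℕ) * (uu p 2 n * liftP p 2 n g)))
      + (∑ j, (algebraMap (ZMod p) (Ru p 2) (vv.2.2 j)) • (xx p 2 n ^ (j : ℕ) * uA))
    with hPsi
  have hnf : ∀ vv, Psi vv
      = liftP p 2 n ((∑ i, C (vv.1 i) * X ^ (i : ℕ)) * g)
        + uu p 2 n * liftP p 2 n ((∑ i, C (vv.1 i) * X ^ (i : ℕ)) * pp
            + (∑ i, C (vv.2.1 i) * X ^ (i : ℕ)) * g + (∑ j, C (vv.2.2 j) * X ^ (j : ℕ)) * a) := by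
    intro vv
    rw [hPsi, hG, huA]
    exact L_nf p n (n - r) (r - t) g pp a vv.1 vv.2.1 vv.2.2
  have hGmem : G ∈ Ck := by
    rw [hC]
    exact Ideal.subset_span (by left; rfl)
  have hAmem : uA ∈ Ck := by
    rw [hC]
    exact Ideal.subset_span (by right; rfl)
  have hPsimem : ∀ vv, Psi vv ∈ Ck := by
    intro vv
    rw [hPsi]
    refine Ck.add_mem (Ck.add_mem (Submodule.sum_mem _ fun i _ => ?_)
      (Submodule.sum_mem _ fun i _ => ?_)) (Submodule.sum_mem _ fun j _ => ?_)
    · rw [smul_term]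
      have h1 : liftP p 2 n (C (vv.1 i)) * (xx p 2 n ^ (i : ℕ) * G)
          = (liftP p 2 n (C (vv.1 i)) * xx p 2 n ^ (i : ℕ)) * G := by ring
      rw [h1]
      exact Ideal.mul_mem_left _ _ hGmem
    · rw [smul_term]
      have h1 : liftP p 2 n (C (vv.2.1 i)) * (xx p 2 n ^ (i : ℕ) * (uu p 2 n * liftP p 2 n g))
          = (liftP p 2 n (C (vv.2.1 i)) * xx p 2 n ^ (i : ℕ) * uu p 2 n) * G := by
        rw [hG]
        have h2 : (liftP p 2 n (C (vv.2.1 i)) * xx p 2 n ^ (i : ℕ) * uu p 2 n)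
            * (liftP p 2 n g + uu p 2 n * liftP p 2 n pp)
            = liftP p 2 n (C (vv.2.1 i)) * (xx p 2 n ^ (i : ℕ) * (uu p 2 n * liftP p 2 n g))
              + (uu p 2 n * uu p 2 n)
                * (liftP p 2 n (C (vv.2.1 i)) * xx p 2 n ^ (i : ℕ) * liftP p 2 n pp) := by ring
        rw [h2, uu_sq, zero_mul, add_zero]
      rw [h1]
      exact Ideal.mul_mem_left _ _ hGmem
    · rw [smul_term]
      have h1 : liftP p 2 n (C (vv.2.2 j)) * (xx p 2 n ^ (j : ℕ) * uA)
          = (liftP p 2 n (C (vv.2.2 j)) * xx p 2 n ^ (j : ℕ)) * uA := by ring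
      rw [h1]
      exact Ideal.mul_mem_left _ _ hAmem
  have hPsiinj : Function.Injective Psi := by
    intro v1 v2 hv
    have hsub : Psi (v1 - v2) = Psi v1 - Psi v2 := by
      rw [hPsi]
      simp only [Prod.fst_sub, Prod.snd_sub, Pi.sub_apply, map_sub, sub_smul,
        Finset.sum_sub_distrib]
      ring
    have h0 : Psi (v1 - v2) = 0 := by rw [hsub, hv, sub_self]
    rw [hnf] at h0
    obtain ⟨h1, h2, h3⟩ := L_zero p n r t hn g pp a hg0 ha0 hgdeg hadeg hrle htr _ _ _ h0
    have h4 : v1 - v2 = 0 := Prod.ext h1 (Prod.ext h2 h3)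
    exact sub_eq_zero.mp h4
  have hPsisurj : ∀ z ∈ Ck, ∃ vv, Psi vv = z := by
    intro z hz
    have hzM : z ∈ M := by
      rw [hspan]
      exact hz
    set v : (Fin (n - r) ⊕ Fin (r - t)) → Rn p 2 n :=
      Sum.elim (fun i => xx p 2 n ^ (i : ℕ) * G) (fun j => xx p 2 n ^ (j : ℕ) * uA) with hv
    have hBv : Bset = Set.range v := by
      ext w
      constructor
      · rintro (⟨i, hi, rfl⟩ | ⟨j, hj, rfl⟩)
        · exact ⟨Sum.inl ⟨i, hi⟩, rfl⟩
        · exact ⟨Sum.inr ⟨j, hj⟩, rfl⟩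
      · rintro ⟨(i | j), rfl⟩
        · exact Or.inl ⟨(i : ℕ), i.isLt, rfl⟩
        · exact Or.inr ⟨(j : ℕ), j.isLt, rfl⟩
    rw [hM, hBv] at hzM
    obtain ⟨cc, hcc⟩ := (Submodule.mem_span_range_iff_exists_fun _).mp hzM
    refine ⟨⟨fun i => piz (cc (Sum.inl i)), fun i => pio (cc (Sum.inl i)),
      fun j => piz (cc (Sum.inr j))⟩, ?_⟩
    have hsplit : (∑ k, cc k • v k)
        = (∑ i, cc (Sum.inl i) • (xx p 2 n ^ (i : ℕ) * G))
          + (∑ j, cc (Sum.inr j) • (xx p 2 n ^ (j : ℕ) * uA)) := by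
      rw [hv, Fintype.sum_sum_type]
      rfl
    rw [hPsi, ← hcc, hsplit, hcomb]
  have hbij : Function.Bijective
      (fun vv => (⟨Psi vv, hPsimem vv⟩ : Ck)) := by
    constructor
    · intro v1 v2 hv
      exact hPsiinj (congrArg Subtype.val hv)
    · rintro ⟨z, hz⟩
      obtain ⟨vv, hvv⟩ := hPsisurj z hz
      exact ⟨vv, Subtype.ext hvv⟩
  have hcard1 : Nat.card Ck
      = Nat.card ((Fin (n - r) → ZMod p) × (Fin (n - r) → ZMod p) × (Fin (r - t) → ZMod p)) :=
    (Nat.card_congr (Equiv.ofBijective _ hbij)).symm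
  rw [hcard1, Nat.card_prod, Nat.card_prod]
  simp only [Nat.card_eq_fintype_card, Fintype.card_fun, Fintype.card_fin, ZMod.card]
  rw [← pow_add, ← pow_add]
  congr 1
  omega

end RnComm

/-- Over `R_2 = Z_p[u]/(u^2)`, let `C = <g(x) + u p(x), u a(x)>` with `g, a`
monic, `deg g = r`, `deg a = t ≤ r`, `a ∣ g ∣ x^n - 1` mod `p` and
`a ∣ p(x) (x^n - 1)/g(x)` mod `p` (phrased via `h` with `g h = x^n - 1`).  Then
`B = {x^i (g + u p) : i < n - r} ∪ {x^j (u a) : j < r - t}` is a minimal spanning set of `C`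
as an `R_2`-module (it spans, and in any `R_2`-linear combination equal to zero each
coefficient annihilates its generator), and `|C| = p^{2n - r - t}`. -/
theorem stmt5 (p n r t : ℕ) (hp : p.Prime) (hn : 0 < n)
    (g pp a h : Polynomial (ZMod p)) (Ck : Ideal (Rn p 2 n))
    (hmg : g.Monic) (hma : a.Monic) (hdg : g.natDegree = r) (hda : a.natDegree = t)
    (htr : t ≤ r) (hag : a ∣ g) (hgh : g * h = (X : Polynomial (ZMod p)) ^ n - 1)
    (hap : a ∣ pp * h)
    (hC : Ck = Ideal.span {liftP p 2 n g + uu p 2 n * liftP p 2 n pp,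
      uu p 2 n * liftP p 2 n a}) :
    Submodule.span (Ru p 2)
        ({c | ∃ i < n - r, c = xx p 2 n ^ i * (liftP p 2 n g + uu p 2 n * liftP p 2 n pp)} ∪
         {c | ∃ j < r - t, c = xx p 2 n ^ j * (uu p 2 n * liftP p 2 n a)} : Set (Rn p 2 n)) =
      Ck.restrictScalars (Ru p 2) ∧
    (∀ (c : Fin (n - r) → Ru p 2) (d : Fin (r - t) → Ru p 2),
      (∑ i, c i • (xx p 2 n ^ (i : ℕ) * (liftP p 2 n g + uu p 2 n * liftP p 2 n pp)) +
       ∑ j, d j • (xx p 2 n ^ (j : ℕ) * (uu p 2 n * liftP p 2 n a))) = 0 →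
      (∀ i, c i • (liftP p 2 n g + uu p 2 n * liftP p 2 n pp) = 0) ∧
      (∀ j, d j • (uu p 2 n * liftP p 2 n a) = 0)) ∧
    Nat.card Ck = p ^ (2 * n - r - t) := by
  haveI : Fact p.Prime := ⟨hp⟩
  letI := rn_commRing p 2 n
  have hXn_ne : ((X : Polynomial (ZMod p)) ^ n - 1) ≠ 0 := by
    intro h0
    have := natDegree_X_pow_sub_C (R := ZMod p) (n := n) (r := 1)
    rw [show ((X : Polynomial (ZMod p)) ^ n - C 1) = X ^ n - 1 by simp, h0] at this
    simp at this
    omega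
  have hg0 : g ≠ 0 := hmg.ne_zero
  have ha0 : a ≠ 0 := hma.ne_zero
  have hh0 : h ≠ 0 := by
    intro h0
    rw [h0, mul_zero] at hgh
    exact hXn_ne hgh.symm
  have hrn : r + h.natDegree = n := by
    have h1 := natDegree_mul hg0 hh0
    rw [hgh] at h1
    rw [show ((X : Polynomial (ZMod p)) ^ n - 1) = X ^ n - C 1 by simp,
      natDegree_X_pow_sub_C] at h1
    omega
  have hrle : r ≤ n := by omega
  have hgdeg : g.degree = (r : ℕ) := by rw [degree_eq_natDegree hg0, hdg]
  have hadeg : a.degree = (t : ℕ) := by rw [degree_eq_natDegree ha0, hda]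
  refine ⟨?_, ?_, ?_⟩
  · rw [hC]
    exact L_span p n r t hp hn g pp a h hmg hma hdg hda htr hag hgh hap
  · intro c d hsum
    choose piz pio hpi using ru_decomp p
    have hcomb :
        (∑ i, c i • (xx p 2 n ^ (i : ℕ) * (liftP p 2 n g + uu p 2 n * liftP p 2 n pp)))
          + (∑ j, d j • (xx p 2 n ^ (j : ℕ) * (uu p 2 n * liftP p 2 n a)))
        = (∑ i, (algebraMap (ZMod p) (Ru p 2) (piz (c i)))
              • (xx p 2 n ^ (i : ℕ) * (liftP p 2 n g + uu p 2 n * liftP p 2 n pp)))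
          + (∑ i, (algebraMap (ZMod p) (Ru p 2) (pio (c i)))
              • (xx p 2 n ^ (i : ℕ) * (uu p 2 n * liftP p 2 n g)))
          + (∑ j, (algebraMap (ZMod p) (Ru p 2) (piz (d j)))
              • (xx p 2 n ^ (j : ℕ) * (uu p 2 n * liftP p 2 n a))) := by
      rw [show (∑ i, c i • (xx p 2 n ^ (i : ℕ)
              * (liftP p 2 n g + uu p 2 n * liftP p 2 n pp)))
          = ∑ i, ((algebraMap (ZMod p) (Ru p 2) (piz (c i)))
                • (xx p 2 n ^ (i : ℕ) * (liftP p 2 n g + uu p 2 n * liftP p 2 n pp))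
              + (algebraMap (ZMod p) (Ru p 2) (pio (c i)))
                • (xx p 2 n ^ (i : ℕ) * (uu p 2 n * liftP p 2 n g)))
          from Finset.sum_congr rfl fun i _ => by
            rw [← L_term_c p n g pp (piz (c i)) (pio (c i)) (i : ℕ), ← hpi (c i)],
        show (∑ j, d j • (xx p 2 n ^ (j : ℕ) * (uu p 2 n * liftP p 2 n a)))
          = ∑ j, (algebraMap (ZMod p) (Ru p 2) (piz (d j)))
              • (xx p 2 n ^ (j : ℕ) * (uu p 2 n * liftP p 2 n a))
          from Finset.sum_congr rfl fun j _ => by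
            rw [← L_term_d p n a (piz (d j)) (pio (d j)) (j : ℕ), ← hpi (d j)],
        Finset.sum_add_distrib]
    have h0 :
        (∑ i, (algebraMap (ZMod p) (Ru p 2) (piz (c i)))
            • (xx p 2 n ^ (i : ℕ) * (liftP p 2 n g + uu p 2 n * liftP p 2 n pp)))
          + (∑ i, (algebraMap (ZMod p) (Ru p 2) (pio (c i)))
              • (xx p 2 n ^ (i : ℕ) * (uu p 2 n * liftP p 2 n g)))
          + (∑ j, (algebraMap (ZMod p) (Ru p 2) (piz (d j)))
              • (xx p 2 n ^ (j : ℕ) * (uu p 2 n * liftP p 2 n a))) = 0 := by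
      rw [← hcomb]
      exact hsum
    rw [L_nf p n (n - r) (r - t) g pp a
      (fun i => piz (c i)) (fun i => pio (c i)) (fun j => piz (d j))] at h0
    obtain ⟨hal, hbe, hga⟩ :=
      L_zero p n r t hn g pp a hg0 ha0 hgdeg hadeg hrle htr _ _ _ h0
    constructor
    · intro i
      have e1 := congrFun hal i
      have e2 := congrFun hbe i
      simp only [Pi.zero_apply] at e1 e2
      have hc0 : c i = 0 := by
        conv_lhs => rw [hpi (c i)]
        rw [e1, e2]
        simp
      rw [hc0]
      exact zero_smul (Ru p 2) ((liftP p 2 n) g + uu p 2 n * (liftP p 2 n) pp)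
    · intro j
      have e1 := congrFun hga j
      simp only [Pi.zero_apply] at e1
      have hd0 : d j = algebraMap (ZMod p) (Ru p 2) (pio (d j)) * uR p 2 := by
        conv_lhs => rw [hpi (d j)]
        rw [e1]
        simp
      rw [hd0]
      refine (mul_smul (algebraMap (ZMod p) (Ru p 2) (pio (d j))) (uR p 2) (uu p 2 n * liftP p 2 n a)).trans ?_
      rw [smul_mk p n (uR p 2)]
      have h1 : Ideal.Quotient.mk (Ideal.span {(X : Polynomial (Ru p 2)) ^ n - 1}) (C (uR p 2))
          * (uu p 2 n * liftP p 2 n a) = (uu p 2 n * uu p 2 n) * liftP p 2 n a := by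
        ring
      rw [h1, uu_sq, zero_mul, smul_zero]
  · rw [hC]
    exact L_card p n r t hp hn g pp a h hmg hma hdg hda htr hag hgh hap
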